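/- Fix positive integers n, u and let a be uniform on (0,1). With F(a) the least k such that a lies within 1/(nu) above a reduced fraction with denominator k, for every k ∈ {1,...,nu}, Pr[F(a) = k] ≤ O(1/√(nu)). In particular, writing k = α√(nu) with α ≥ 1, Pr[F(a)=k] ≤ (2 + 2 ln α)/(α √(nu)). -/

import Mathlib

open MeasureTheory

/-- `k` claims `a`: `a` is at most `1/(nu)` above a reduced fraction with
denominator `k`. -/
def claims (n u k : ℕ) (a : ℝ) : Prop :=
  ∃ c : ℕ, Nat.Coprime c k ∧ (c : ℝ) / k ≤ a ∧ a ≤ (c : ℝ) / k + 1 / ((n : ℝ) * u)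

/-- `F(a) = k`: `k` is the least positive integer claiming `a`. -/
def FvalEq (n u : ℕ) (a : ℝ) (k : ℕ) : Prop :=
  claims n u k a ∧ ∀ j : ℕ, 0 < j → j < k → ¬claims n u j a

noncomputable def jf (k c : ℕ) : ℕ := (-(c : ZMod k)⁻¹ : ZMod k).val

lemma jf_lt {k : ℕ} (hk : 0 < k) (c : ℕ) : jf k c < k := by
  haveI : NeZero k := ⟨hk.ne'⟩
  exact ZMod.val_lt _

lemma mul_inv_one {k c : ℕ} (hc : Nat.Coprime c k) :
    (c : ZMod k) * (c : ZMod k)⁻¹ = 1 := ZMod.coe_mul_inv_eq_one c hc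

lemma jf_pos {k c : ℕ} (hk : 2 ≤ k) (hc : Nat.Coprime c k) : 1 ≤ jf k c := by
  haveI : NeZero k := ⟨by omega⟩
  haveI : Fact (1 < k) := ⟨by omega⟩
  rw [Nat.one_le_iff_ne_zero]
  intro h
  have h0 : (-(c : ZMod k)⁻¹ : ZMod k) = 0 := by rwa [← ZMod.val_eq_zero]
  have h1 : ((c : ZMod k)⁻¹ : ZMod k) = 0 := by simpa using h0
  have := mul_inv_one hc
  rw [h1, mul_zero] at this
  exact one_ne_zero this.symm

lemma jf_dvd {k c : ℕ} (hk : 2 ≤ k) (hc : Nat.Coprime c k) :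
    k ∣ c * jf k c + 1 := by
  haveI : NeZero k := ⟨by omega⟩
  rw [← ZMod.natCast_eq_zero_iff]
  push_cast
  have hv : ((jf k c : ℕ) : ZMod k) = -(c : ZMod k)⁻¹ := by
    simp [jf, ZMod.natCast_val]
  rw [hv, mul_neg, mul_inv_one hc]
  ring

lemma jf_injOn {k : ℕ} (hk : 2 ≤ k) {c1 c2 : ℕ} (h1 : c1 < k) (hc1 : c1.Coprime k)
    (h2 : c2 < k) (hc2 : c2.Coprime k) (h : jf k c1 = jf k c2) : c1 = c2 := by
  haveI : NeZero k := ⟨by omega⟩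
  have he : (-(c1 : ZMod k)⁻¹ : ZMod k) = -(c2 : ZMod k)⁻¹ := ZMod.val_injective k h
  have hinv : ((c1 : ZMod k)⁻¹ : ZMod k) = (c2 : ZMod k)⁻¹ := by
    have := congrArg Neg.neg he; simpa using this
  have hcc : (c1 : ZMod k) = (c2 : ZMod k) := by
    calc (c1 : ZMod k) = c1 * ((c2 : ZMod k)⁻¹ * c2) := by
          rw [mul_comm ((c2 : ZMod k)⁻¹), mul_inv_one hc2, mul_one]
      _ = (c1 * (c1 : ZMod k)⁻¹) * c2 := by rw [← hinv]; ring
      _ = c2 := by rw [mul_inv_one hc1, one_mul]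
  have := congrArg ZMod.val hcc
  rwa [ZMod.val_cast_of_lt h1, ZMod.val_cast_of_lt h2] at this

lemma not_ge {n u k : ℕ} (hk : 2 ≤ k) {a : ℝ} {c : ℕ}
    (hc : c.Coprime k) (hF : FvalEq n u a k) (hlow : (c : ℝ) / k ≤ a)
    (hhigh : a ≤ (c : ℝ) / k + 1 / ((n : ℝ) * u)) :
    a < (c : ℝ) / k + 1 / ((jf k c : ℝ) * k) := by
  set j := jf k c with hj
  have hj1 : 1 ≤ j := jf_pos hk hc
  have hjk : j < k := jf_lt (by omega) c
  obtain ⟨p, hp⟩ := jf_dvd hk hc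
  have hp1 : 1 ≤ p := by
    rcases Nat.eq_zero_or_pos p with h | h
    · rw [h, mul_zero] at hp; omega
    · exact h
  have hk0 : (0:ℝ) < k := by positivity
  have hj0 : (0:ℝ) < j := by exact_mod_cast hj1
  have hpkr : (c:ℝ) * j + 1 = k * p := by exact_mod_cast hp
  have hpj : (p:ℝ) / j = (c:ℝ)/k + 1/((j:ℝ)*k) := by
    field_simp
    linear_combination -hpkr
  have hlt : a < (p:ℝ)/j := by
    by_contra hle
    push_neg at hle
    set d := Nat.gcd p j with hd
    have hd0 : 0 < d := Nat.gcd_pos_of_pos_right p (by omega)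
    have hpd : p / d * d = p := Nat.div_mul_cancel (Nat.gcd_dvd_left p j)
    have hjd : j / d * d = j := Nat.div_mul_cancel (Nat.gcd_dvd_right p j)
    have hj'pos : 0 < j / d := by
      rcases Nat.eq_zero_or_pos (j / d) with h | h
      · rw [h] at hjd; omega
      · exact h
    have hj'lt : j / d < k := lt_of_le_of_lt (Nat.div_le_self _ _) hjk
    have hcop : Nat.Coprime (p / d) (j / d) := Nat.coprime_div_gcd_div_gcd hd0
    have hnat : p / d * j = p * (j / d) := by
      calc p / d * j = p / d * (j / d * d) := by rw [hjd]
        _ = (p / d * d) * (j / d) := by ring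
        _ = p * (j / d) := by rw [hpd]
    have heq : ((p / d : ℕ) : ℝ) / ((j / d : ℕ) : ℝ) = (p:ℝ)/j := by
      rw [div_eq_div_iff (by exact_mod_cast hj'pos.ne') hj0.ne']
      exact_mod_cast hnat
    apply hF.2 (j / d) hj'pos hj'lt
    refine ⟨p / d, hcop, by rw [heq]; exact hle, ?_⟩
    rw [heq, hpj]
    have : (0:ℝ) < 1/((j:ℝ)*k) := by positivity
    linarith
  rw [hpj] at hlt
  exact hlt

lemma key (n u k : ℕ) (hn : 0 < n) (hu : 0 < u) (hk : 2 ≤ k) :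
    volume {a ∈ Set.Ioo (0:ℝ) 1 | FvalEq n u a k} ≤
      ENNReal.ofReal (∑ j ∈ Finset.Ico 1 k,
        min (1/((n:ℝ)*u)) (1/((j:ℝ)*k))) := by
  have hT0 : (0:ℝ) < (n:ℝ)*u := by positivity
  have hk0 : (0:ℝ) < k := by positivity
  set A := (Finset.Ico 1 k).filter (fun c => Nat.Coprime c k) with hA
  set I : ℕ → Set ℝ := fun c =>
    Set.Icc ((c:ℝ)/k) ((c:ℝ)/k + min (1/((n:ℝ)*u)) (1/((jf k c : ℝ)*k))) with hI
  have hsub : {a ∈ Set.Ioo (0:ℝ) 1 | FvalEq n u a k} ⊆ ⋃ c ∈ A, I c := by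
    rintro a ⟨⟨ha0, ha1⟩, hF⟩
    obtain ⟨c, hc, hlow, hhigh⟩ := hF.1
    have hck : c < k := by
      by_contra h
      push_neg at h
      have : (1:ℝ) ≤ (c:ℝ)/k := by
        rw [le_div_iff₀ hk0]
        exact_mod_cast by simpa using h
      linarith
    have hc1 : 1 ≤ c := by
      rcases Nat.eq_zero_or_pos c with h | h
      · exfalso; rw [h] at hc; rw [Nat.coprime_zero_left] at hc; omega
      · exact h
    have hmem : c ∈ A := by
      simp only [hA, Finset.mem_filter, Finset.mem_Ico]
      exact ⟨⟨hc1, hck⟩, hc⟩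
    refine Set.mem_biUnion hmem ?_
    refine ⟨hlow, ?_⟩
    have h2 := not_ge hk hc hF hlow hhigh
    rcases min_cases (1/((n:ℝ)*u)) (1/((jf k c : ℝ)*k)) with ⟨he, _⟩ | ⟨he, _⟩ <;>
      rw [he] <;> linarith
  calc volume {a ∈ Set.Ioo (0:ℝ) 1 | FvalEq n u a k}
      ≤ volume (⋃ c ∈ A, I c) := measure_mono hsub
    _ ≤ ∑ c ∈ A, volume (I c) := measure_biUnion_finset_le A I
    _ = ∑ c ∈ A, ENNReal.ofReal (min (1/((n:ℝ)*u)) (1/((jf k c : ℝ)*k))) := by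
        simp [hI, Real.volume_Icc]
    _ = ENNReal.ofReal (∑ c ∈ A, min (1/((n:ℝ)*u)) (1/((jf k c : ℝ)*k))) := by
        rw [ENNReal.ofReal_sum_of_nonneg]
        intro i _
        positivity
    _ ≤ _ := by
        apply ENNReal.ofReal_le_ofReal
        have hinj : Set.InjOn (jf k) A := by
          intro c1 h1 c2 h2 h
          simp only [hA, Finset.mem_filter, Finset.mem_Ico, Finset.mem_coe] at h1 h2
          exact jf_injOn hk h1.1.2 h1.2 h2.1.2 h2.2 h
        have himg : ∑ j ∈ A.image (jf k), min (1/((n:ℝ)*u)) (1/((j:ℝ)*k))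
            = ∑ c ∈ A, min (1/((n:ℝ)*u)) (1/((jf k c : ℝ)*k)) :=
          Finset.sum_image (fun c h1 c2 h2 h => hinj h1 h2 h)
        rw [← himg]
        apply Finset.sum_le_sum_of_subset_of_nonneg
        · intro j hj
          simp only [Finset.mem_image] at hj
          obtain ⟨c, hcA, rfl⟩ := hj
          simp only [hA, Finset.mem_filter, Finset.mem_Ico] at hcA
          simp only [Finset.mem_Ico]
          exact ⟨jf_pos hk hcA.2, jf_lt (by omega) c⟩
        · intro j _ _
          positivity

lemma harm (m : ℕ) (hm : 1 ≤ m) : ∀ N : ℕ, m ≤ N →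
    ∑ j ∈ Finset.Ioc m N, (1:ℝ)/j ≤ Real.log N - Real.log m := by
  intro N
  induction N with
  | zero => intro h; omega
  | succ N ih =>
    intro h
    rcases Nat.lt_or_ge m (N+1) with h' | h'
    · have hmN : m ≤ N := by omega
      have hN1 : (1:ℕ) ≤ N := le_trans hm hmN
      have hins : Finset.Ioc m (N+1) = insert (N+1) (Finset.Ioc m N) := by
        ext x; simp only [Finset.mem_Ioc, Finset.mem_insert]; omega
      rw [hins, Finset.sum_insert (by simp)]
      have hstep : (1:ℝ)/(N+1) ≤ Real.log (N+1) - Real.log N := by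
        have hN0 : (0:ℝ) < N := by exact_mod_cast hN1
        have := Real.log_le_sub_one_of_pos (x := (N:ℝ)/(N+1)) (by positivity)
        rw [Real.log_div (by positivity) (by positivity)] at this
        have h2 : (N:ℝ)/(N+1) - 1 = -(1/(N+1)) := by field_simp; ring
        rw [h2] at this
        linarith
      have := ih hmN
      push_cast
      push_cast at hstep this
      linarith
    · have : m = N + 1 := by omega
      subst this
      simp

lemma sum_b2 (T k : ℕ) (hk : 2 ≤ k) (hkT : k ≤ T) (hsq : Real.sqrt T ≤ k) :
    ∑ j ∈ Finset.Ico 1 k, min (1/(T:ℝ)) (1/((j:ℝ)*k)) ≤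
      (2 + 2*Real.log ((k:ℝ)/Real.sqrt T))/k := by
  have hk0 : (0:ℝ) < k := by positivity
  have hT2 : (2:ℕ) ≤ T := le_trans hk hkT
  have hT0r : (0:ℝ) < T := by exact_mod_cast by omega
  have hs0 : (0:ℝ) < Real.sqrt T := Real.sqrt_pos.mpr hT0r
  set L := Real.log ((k:ℝ)/Real.sqrt T) with hL
  have hL0 : 0 ≤ L := Real.log_nonneg (by rw [le_div_iff₀ hs0]; linarith)
  set m := T / k with hm
  have hm1 : 1 ≤ m := (Nat.one_le_div_iff (by omega)).mpr hkT
  set m' := min m (k-1) with hm'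
  have hm'1 : 1 ≤ m' := by omega
  have hm'k : m' ≤ k - 1 := by omega
  have hico : Finset.Ico 1 k = Finset.Icc 1 m' ∪ Finset.Ioc m' (k-1) := by
    ext x
    simp only [Finset.mem_Ico, Finset.mem_union, Finset.mem_Icc, Finset.mem_Ioc]
    omega
  have hdisj : Disjoint (Finset.Icc 1 m') (Finset.Ioc m' (k-1)) := by
    rw [Finset.disjoint_left]
    intro x hx hx'
    simp only [Finset.mem_Icc] at hx
    simp only [Finset.mem_Ioc] at hx'
    omega
  rw [hico, Finset.sum_union hdisj]
  have hb1 : ∑ j ∈ Finset.Icc 1 m', min (1/(T:ℝ)) (1/((j:ℝ)*k)) ≤ 1/k := by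
    calc ∑ j ∈ Finset.Icc 1 m', min (1/(T:ℝ)) (1/((j:ℝ)*k))
        ≤ ∑ j ∈ Finset.Icc 1 m', 1/(T:ℝ) := Finset.sum_le_sum (fun j _ => min_le_left _ _)
      _ = (m' : ℝ)/T := by
          rw [Finset.sum_const, Nat.card_Icc, nsmul_eq_mul]
          have : m' + 1 - 1 = m' := by omega
          rw [this]
          ring
      _ ≤ 1/k := by
          rw [div_le_div_iff₀ hT0r hk0]
          have h1 : (m' : ℝ) ≤ (m : ℝ) := by exact_mod_cast Nat.min_le_left m (k-1)
          have h2 : (m : ℝ) ≤ (T:ℝ)/k := Nat.cast_div_le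
          rw [le_div_iff₀ hk0] at h2
          nlinarith
  have hb2 : ∑ j ∈ Finset.Ioc m' (k-1), min (1/(T:ℝ)) (1/((j:ℝ)*k)) ≤
      (Real.log ((k-1 : ℕ):ℝ) - Real.log (m':ℝ))/k := by
    calc ∑ j ∈ Finset.Ioc m' (k-1), min (1/(T:ℝ)) (1/((j:ℝ)*k))
        ≤ ∑ j ∈ Finset.Ioc m' (k-1), 1/((j:ℝ)*k) :=
          Finset.sum_le_sum (fun j _ => min_le_right _ _)
      _ = (∑ j ∈ Finset.Ioc m' (k-1), (1:ℝ)/j)/k := by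
          rw [Finset.sum_div]
          exact Finset.sum_congr rfl (fun j _ => (div_div 1 (j:ℝ) (k:ℝ)).symm)
      _ ≤ _ := by
          gcongr
          exact harm m' hm'1 (k-1) hm'k
  have hkey : Real.log ((k-1 : ℕ):ℝ) - Real.log (m':ℝ) ≤ Real.log 2 + 2*L := by
    have e2 : 2*L = 2*Real.log k - Real.log T := by
      rw [hL, Real.log_div (by positivity) (by positivity),
        Real.log_sqrt (le_of_lt hT0r)]
      ring
    by_cases hcase : m ≤ k - 1
    · have hmm : m' = m := by omega
      have hdm : k * m + T % k = T := by rw [hm]; exact Nat.div_add_mod T k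
      have hmod : T % k < k := Nat.mod_lt T (by omega)
      have hTr : (T:ℝ) < (k:ℝ)*(m:ℝ) + k := by
        have h1 : ((k * m + T % k : ℕ):ℝ) = (T:ℝ) := by exact_mod_cast hdm
        push_cast at h1
        have h2 : ((T % k : ℕ):ℝ) < (k:ℝ) := by exact_mod_cast hmod
        linarith
      have hm0 : (1:ℝ) ≤ (m:ℝ) := by exact_mod_cast hm1
      have hT2m : (T:ℝ) < 2*(k:ℝ)*(m:ℝ) := by nlinarith
      have hlogm : Real.log ((T:ℝ)/(2*k)) ≤ Real.log (m:ℝ) := by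
        apply Real.log_le_log (by positivity)
        rw [div_le_iff₀ (by positivity)]
        nlinarith
      have e1 : Real.log ((T:ℝ)/(2*k)) = Real.log T - Real.log 2 - Real.log k := by
        rw [Real.log_div (by positivity) (by positivity), Real.log_mul (by norm_num) (by positivity)]
        ring
      have hlogk : Real.log ((k-1 : ℕ):ℝ) ≤ Real.log k := by
        apply Real.log_le_log
        · have : (1:ℕ) ≤ k - 1 := by omega
          exact_mod_cast by omega
        · exact_mod_cast Nat.sub_le k 1
      rw [hmm]
      linarith
    · have hmm : m' = k - 1 := by omega
      rw [hmm]
      have h2 : (0:ℝ) ≤ Real.log 2 := Real.log_nonneg (by norm_num)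
      linarith
  have hfin : 1/(k:ℝ) + (Real.log ((k-1 : ℕ):ℝ) - Real.log (m':ℝ))/k ≤ (2 + 2*L)/k := by
    rw [← add_div, div_le_div_iff₀ hk0 hk0]
    have hlog2 : Real.log 2 ≤ 1 := by
      have := Real.log_le_sub_one_of_pos (x := (2:ℝ)) (by norm_num)
      linarith
    nlinarith [hkey]
  linarith

lemma sqrt_le_self' {x : ℝ} (hx : 1 ≤ x) : Real.sqrt x ≤ x := by
  nlinarith [Real.sq_sqrt (by linarith : (0:ℝ) ≤ x), Real.sqrt_nonneg x,
    Real.one_le_sqrt.mpr hx]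

lemma sum_b1 (T k : ℕ) (hk : 2 ≤ k) (hkT : k ≤ T) :
    ∑ j ∈ Finset.Ico 1 k, min (1/(T:ℝ)) (1/((j:ℝ)*k)) ≤ 2/Real.sqrt T := by
  have hk0 : (0:ℝ) < k := by positivity
  have hT2 : (2:ℕ) ≤ T := le_trans hk hkT
  have hT0r : (0:ℝ) < T := by exact_mod_cast by omega
  have hs0 : (0:ℝ) < Real.sqrt T := Real.sqrt_pos.mpr hT0r
  have hss : Real.sqrt T * Real.sqrt T = T := Real.mul_self_sqrt hT0r.le
  rcases le_total ((k:ℝ)) (Real.sqrt T) with hc | hc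
  · calc ∑ j ∈ Finset.Ico 1 k, min (1/(T:ℝ)) (1/((j:ℝ)*k))
        ≤ ∑ j ∈ Finset.Ico 1 k, 1/(T:ℝ) :=
          Finset.sum_le_sum (fun j _ => min_le_left _ _)
      _ = ((k-1 : ℕ):ℝ)/T := by
          rw [Finset.sum_const, Nat.card_Ico, nsmul_eq_mul]
          ring
      _ ≤ 2/Real.sqrt T := by
          rw [div_le_div_iff₀ hT0r hs0]
          have h1 : ((k-1:ℕ):ℝ) ≤ (k:ℝ) := by exact_mod_cast Nat.sub_le k 1
          nlinarith
  · refine le_trans (sum_b2 T k hk hkT hc) ?_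
    rw [div_le_div_iff₀ hk0 hs0]
    have hα : (k:ℝ)/Real.sqrt T * Real.sqrt T = k := div_mul_cancel₀ _ hs0.ne'
    have hlog : Real.log ((k:ℝ)/Real.sqrt T) ≤ (k:ℝ)/Real.sqrt T - 1 :=
      Real.log_le_sub_one_of_pos (by positivity)
    nlinarith

/-- For `a` uniform on `(0,1)` and any `k ∈ {1,...,nu}`,
`Pr[F(a) = k] ≤ O(1/√(nu))`; in particular, writing `k = α√(nu)` with `α ≥ 1`,
`Pr[F(a) = k] ≤ (2 + 2 ln α)/(α√(nu)) = (2 + 2 ln(k/√(nu)))/k`. -/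
theorem stmt_13 : ∃ C > (0 : ℝ), ∀ n u : ℕ, 0 < n → 0 < u → ∀ k : ℕ, 1 ≤ k → k ≤ n * u →
    volume {a ∈ Set.Ioo (0 : ℝ) 1 | FvalEq n u a k} ≤
      ENNReal.ofReal (C / Real.sqrt ((n : ℝ) * u)) ∧
    (Real.sqrt ((n : ℝ) * u) ≤ k →
      volume {a ∈ Set.Ioo (0 : ℝ) 1 | FvalEq n u a k} ≤
        ENNReal.ofReal ((2 + 2 * Real.log ((k : ℝ) / Real.sqrt ((n : ℝ) * u))) / k)) := by
  refine ⟨2, by norm_num, ?_⟩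
  intro n u hn hu k hk1 hkT
  have hcast : ((n*u : ℕ):ℝ) = (n:ℝ)*u := by push_cast; ring
  have hT1 : 1 ≤ n * u := Nat.one_le_iff_ne_zero.mpr (by positivity)
  have hT0r : (0:ℝ) < (n:ℝ)*u := by positivity
  have hT1r : (1:ℝ) ≤ (n:ℝ)*u := by
    rw [← hcast]; exact_mod_cast hT1
  have hs0 : (0:ℝ) < Real.sqrt ((n:ℝ)*u) := Real.sqrt_pos.mpr hT0r
  rcases eq_or_lt_of_le hk1 with hk1' | hk2
  · -- k = 1
    have hk1'' : k = 1 := hk1'.symm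
    subst hk1''
    have hsub : {a ∈ Set.Ioo (0:ℝ) 1 | FvalEq n u a 1} ⊆
        Set.Icc 0 (1/((n:ℝ)*u)) := by
      rintro a ⟨⟨ha0, ha1⟩, hF⟩
      obtain ⟨c, _, hlow, hhigh⟩ := hF.1
      simp only [Nat.cast_one, div_one] at hlow hhigh
      have hc0 : c = 0 := by
        by_contra h
        have : (1:ℝ) ≤ (c:ℝ) := by exact_mod_cast Nat.one_le_iff_ne_zero.mpr h
        linarith
      subst hc0
      simp only [Nat.cast_zero] at hhigh
      exact ⟨ha0.le, by linarith⟩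
    have hvol : volume {a ∈ Set.Ioo (0:ℝ) 1 | FvalEq n u a 1} ≤
        ENNReal.ofReal (1/((n:ℝ)*u)) := by
      refine le_trans (measure_mono hsub) ?_
      rw [Real.volume_Icc]
      simp
    constructor
    · refine le_trans hvol (ENNReal.ofReal_le_ofReal ?_)
      rw [div_le_div_iff₀ hT0r hs0]
      have := sqrt_le_self' hT1r
      nlinarith
    · intro hsk
      refine le_trans hvol (ENNReal.ofReal_le_ofReal ?_)
      have hss : Real.sqrt ((n:ℝ)*u) * Real.sqrt ((n:ℝ)*u) = (n:ℝ)*u :=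
        Real.mul_self_sqrt hT0r.le
      simp only [Nat.cast_one] at hsk ⊢
      have hTle : (n:ℝ)*u ≤ 1 := by nlinarith
      have hTeq : (n:ℝ)*u = 1 := le_antisymm hTle hT1r
      rw [hTeq, Real.sqrt_one]
      norm_num
  · -- 2 ≤ k
    have hk2' : 2 ≤ k := hk2
    have hkey := key n u k hn hu hk2'
    constructor
    · refine le_trans hkey (ENNReal.ofReal_le_ofReal ?_)
      have hb := sum_b1 (n*u) k hk2' hkT
      rw [hcast] at hb
      exact hb
    · intro hsk
      refine le_trans hkey (ENNReal.ofReal_le_ofReal ?_)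
      have hb := sum_b2 (n*u) k hk2' hkT (by rw [hcast]; exact hsk)
      rw [hcast] at hb
      exact hb
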